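/- For positive semidefinite matrices A and B and any real r ≥ 1, ‖A^r + B^r‖ ≤ ‖(A + B)^r‖, where ‖·‖ is the operator norm. -/

import Mathlib

open scoped ComplexOrder Matrix.Norms.L2Operator

set_option maxHeartbeats 1000000
set_option synthInstance.maxHeartbeats 400000

/-- The `r`-th power of a matrix, defined via the spectral theorem (functional calculus)
when the matrix is Hermitian, and junk value `0` otherwise. -/
noncomputable def Matrix.rpow {n : ℕ} (A : Matrix (Fin n) (Fin n) ℂ) (r : ℝ) :
    Matrix (Fin n) (Fin n) ℂ :=
  if h : A.IsHermitian then h.cfc (fun x => x ^ r) else 0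

lemma aux_contOn (r : ℝ) (hr : 1 ≤ r) (s : Set ℝ) :
    ContinuousOn (fun x : ℝ => x ^ r) s := fun x _ =>
  (Real.continuousAt_rpow_const x r (Or.inr (by linarith : (0:ℝ) ≤ r))).continuousWithinAt

lemma aux_cstar {H : Type*} [NormedAddCommGroup H] [InnerProductSpace ℂ H] [CompleteSpace H]
    (a b : H →L[ℂ] H) (ha : 0 ≤ a) (hb : 0 ≤ b) (r : ℝ) (hr : 1 ≤ r) :
    ‖cfc (fun x : ℝ => x ^ r) a + cfc (fun x : ℝ => x ^ r) b‖
      ≤ ‖cfc (fun x : ℝ => x ^ r) (a + b)‖ := by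
  rcases subsingleton_or_nontrivial H with hH | hH
  · rw [Subsingleton.elim (cfc (fun x : ℝ => x ^ r) a + cfc (fun x : ℝ => x ^ r) b)
      (cfc (fun x : ℝ => x ^ r) (a + b))]
  · set c : ℝ := ‖a + b‖ with hc
    have hrpos : (0:ℝ) < r := lt_of_lt_of_le one_pos hr
    have hab : 0 ≤ a + b := add_nonneg ha hb
    have key : ∀ x : H →L[ℂ] H, 0 ≤ x → x ≤ a + b →
        cfc (fun x : ℝ => x ^ r) x ≤ c ^ (r - 1) • x := by
      intro x hx hxab
      have hxc : ‖x‖ ≤ c := CStarAlgebra.norm_le_norm_of_nonneg_of_le hx hxab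
      have h1 : cfc (fun x : ℝ => x ^ r) x ≤ cfc (fun t : ℝ => c ^ (r-1) * t) x := by
        apply cfc_mono ?_ (aux_contOn r hr _) (by fun_prop)
        intro t ht
        have ht0 : 0 ≤ t := spectrum_nonneg_of_nonneg hx ht
        have htc : t ≤ c :=
          le_trans (le_trans (Real.le_norm_self t) (spectrum.norm_le_norm_of_mem ht)) hxc
        show t ^ r ≤ c ^ (r - 1) * t
        rcases eq_or_lt_of_le ht0 with h0 | h0
        · rw [← h0, Real.zero_rpow (ne_of_gt hrpos), mul_zero]
        · have h2 : t ^ r = t ^ (r - 1) * t := by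
            rw [← Real.rpow_add_one h0.ne' (r-1), sub_add_cancel]
          rw [h2]
          exact mul_le_mul_of_nonneg_right
            (Real.rpow_le_rpow ht0 htc (by linarith)) ht0
      rwa [cfc_const_mul_id _ x] at h1
    have hsum : cfc (fun x : ℝ => x ^ r) a + cfc (fun x : ℝ => x ^ r) b
        ≤ c ^ (r-1) • (a + b) := by
      have h := add_le_add (key a ha (le_add_of_nonneg_right hb))
        (key b hb (le_add_of_nonneg_left ha))
      rwa [← smul_add] at h
    have hnn : 0 ≤ cfc (fun x : ℝ => x ^ r) a + cfc (fun x : ℝ => x ^ r) b :=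
      add_nonneg
        (cfc_nonneg fun t ht => Real.rpow_nonneg (spectrum_nonneg_of_nonneg ha ht) r)
        (cfc_nonneg fun t ht => Real.rpow_nonneg (spectrum_nonneg_of_nonneg hb ht) r)
    have h2 : ‖cfc (fun x : ℝ => x ^ r) a + cfc (fun x : ℝ => x ^ r) b‖ ≤ c ^ (r-1) * c := by
      calc ‖cfc (fun x : ℝ => x ^ r) a + cfc (fun x : ℝ => x ^ r) b‖
          ≤ ‖c ^ (r-1) • (a + b)‖ :=
            CStarAlgebra.norm_le_norm_of_nonneg_of_le hnn hsum
        _ = c ^ (r-1) * c := by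
            rw [norm_smul, Real.norm_of_nonneg (Real.rpow_nonneg (norm_nonneg _) _)]
    have h3 : c ^ (r-1) * c = c ^ r := by
      rcases eq_or_lt_of_le (norm_nonneg (a + b)) with h0 | h0
      · rw [← hc] at h0
        rw [← h0, mul_zero, Real.zero_rpow (ne_of_gt hrpos)]
      · rw [← Real.rpow_add_one (by positivity) (r-1), sub_add_cancel]
    have h4 : c ^ r ≤ ‖cfc (fun x : ℝ => x ^ r) (a + b)‖ := by
      have hcs : c ∈ spectrum ℝ (a + b) := CStarAlgebra.norm_mem_spectrum_of_nonneg hab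
      have hmem : c ^ r ∈ spectrum ℝ (cfc (fun x : ℝ => x ^ r) (a + b)) := by
        rw [cfc_map_spectrum (fun x : ℝ => x ^ r) (a + b) (hf := aux_contOn r hr _)]
        exact ⟨c, hcs, rfl⟩
      exact (Real.le_norm_self _).trans (spectrum.norm_le_norm_of_mem hmem)
    calc ‖cfc (fun x : ℝ => x ^ r) a + cfc (fun x : ℝ => x ^ r) b‖
        ≤ c ^ (r-1) * c := h2
      _ = c ^ r := h3
      _ ≤ ‖cfc (fun x : ℝ => x ^ r) (a + b)‖ := h4

/-- For positive semidefinite matrices `A` and `B` and any real `r ≥ 1`,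
`‖A^r + B^r‖ ≤ ‖(A + B)^r‖` in the operator (l2) norm. -/
theorem norm_rpow_add_rpow_le {n : ℕ} (A B : Matrix (Fin n) (Fin n) ℂ)
    (hA : A.PosSemidef) (hB : B.PosSemidef) (r : ℝ) (hr : 1 ≤ r) :
    ‖Matrix.rpow A r + Matrix.rpow B r‖ ≤ ‖Matrix.rpow (A + B) r‖ := by
  classical
  have hM : (A + B).PosSemidef := hA.add hB
  have eqA : Matrix.rpow A r = cfc (fun x : ℝ => x ^ r) A := by
    rw [Matrix.rpow, dif_pos hA.1]; exact (hA.1.cfc_eq _).symm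
  have eqB : Matrix.rpow B r = cfc (fun x : ℝ => x ^ r) B := by
    rw [Matrix.rpow, dif_pos hB.1]; exact (hB.1.cfc_eq _).symm
  have eqM : Matrix.rpow (A + B) r = cfc (fun x : ℝ => x ^ r) (A + B) := by
    rw [Matrix.rpow, dif_pos hM.1]; exact (hM.1.cfc_eq _).symm
  set e := Matrix.toEuclideanCLM (𝕜 := ℂ) (n := Fin n) with he
  let L : Matrix (Fin n) (Fin n) ℂ →ₗ[ℂ]
      (EuclideanSpace ℂ (Fin n) →L[ℂ] EuclideanSpace ℂ (Fin n)) :=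
    { toFun := e, map_add' := map_add e, map_smul' := map_smul e }
  have hcont : Continuous e := L.continuous_of_finiteDimensional
  have posmap : ∀ (X : Matrix (Fin n) (Fin n) ℂ), X.PosSemidef → 0 ≤ e X := by
    intro X hX
    obtain ⟨C, hC⟩ : ∃ C : Matrix (Fin n) (Fin n) ℂ, X = Matrix.conjTranspose C * C := by
      open scoped MatrixOrder in
      obtain ⟨C, hC⟩ := CStarAlgebra.nonneg_iff_eq_star_mul_self.mp hX.nonneg
      exact ⟨C, hC⟩
    rw [hC, ← Matrix.star_eq_conjTranspose, map_mul, map_star]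
    exact star_mul_self_nonneg (e C)
  have h0A : 0 ≤ e A := posmap A hA
  have h0B : 0 ≤ e B := posmap B hB
  have mapA : e (cfc (fun x : ℝ => x ^ r) A) = cfc (fun x : ℝ => x ^ r) (e A) :=
    StarAlgHomClass.map_cfc (S := ℂ) e (fun x : ℝ => x ^ r) A
      (hf := aux_contOn r hr _) (hφ := hcont) (ha := hA.1)
      (hφa := IsSelfAdjoint.of_nonneg h0A)
  have mapB : e (cfc (fun x : ℝ => x ^ r) B) = cfc (fun x : ℝ => x ^ r) (e B) :=
    StarAlgHomClass.map_cfc (S := ℂ) e (fun x : ℝ => x ^ r) B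
      (hf := aux_contOn r hr _) (hφ := hcont) (ha := hB.1)
      (hφa := IsSelfAdjoint.of_nonneg h0B)
  have mapM : e (cfc (fun x : ℝ => x ^ r) (A + B)) = cfc (fun x : ℝ => x ^ r) (e A + e B) := by
    have h := StarAlgHomClass.map_cfc (S := ℂ) e (fun x : ℝ => x ^ r) (A + B)
      (hf := aux_contOn r hr _) (hφ := hcont) (ha := hM.1)
      (hφa := IsSelfAdjoint.of_nonneg (posmap _ hM))
    rwa [map_add] at h
  rw [eqA, eqB, eqM, Matrix.cstar_norm_def, Matrix.cstar_norm_def, map_add, mapA, mapB, mapM]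
  exact aux_cstar (e A) (e B) h0A h0B r hr
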